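/- Let Ω be a nonempty finite index set, π_ω > 0 with Σ_ω π_ω = 1, z : Ω → ℝ, and α ∈ (0,1). Let q ∈ ℝ satisfy Σ_{ω : z_ω ≤ q} π_ω ≥ α and Σ_{ω : z_ω < q} π_ω ≤ α (i.e., q is the lower α-quantile, the value-at-risk VaR_α). Then q minimizes the Rockafellar–Uryasev objective: for every ν ∈ ℝ, h_α(q) ≤ h_α(ν), and consequently CVaR_α(z) = h_α(q); in particular the infimum defining CVaR_α(z) is attained. -/
import Mathlib


open Finset

/-- The lower α-quantile (value-at-risk) minimizes the Rockafellar–Uryasev objective, and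
hence CVaR_α(z) = h_α(VaR_α(z)); in particular the infimum defining CVaR is attained. -/
theorem var_minimizes_rockafellar_uryasev {Ω : Type*} [Fintype Ω] [Nonempty Ω]
    (π : Ω → ℝ) (hπ : ∀ ω, 0 < π ω) (hsum : ∑ ω, π ω = 1)
    (z : Ω → ℝ) (α : ℝ) (hα0 : 0 < α) (hα1 : α < 1) (q : ℝ)
    (hq1 : α ≤ ∑ ω ∈ Finset.univ.filter (fun ω => z ω ≤ q), π ω)
    (hq2 : ∑ ω ∈ Finset.univ.filter (fun ω => z ω < q), π ω ≤ α) :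
    (∀ ν : ℝ,
      q + (1 / (1 - α)) * ∑ ω, π ω * max (z ω - q) 0 ≤
      ν + (1 / (1 - α)) * ∑ ω, π ω * max (z ω - ν) 0) ∧
    IsLeast (Set.range (fun ν : ℝ => ν + (1 / (1 - α)) * ∑ ω, π ω * max (z ω - ν) 0))
      (q + (1 / (1 - α)) * ∑ ω, π ω * max (z ω - q) 0) ∧
    sInf (Set.range (fun ν : ℝ => ν + (1 / (1 - α)) * ∑ ω, π ω * max (z ω - ν) 0)) =
      q + (1 / (1 - α)) * ∑ ω, π ω * max (z ω - q) 0 := by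
  have hc : (0:ℝ) < 1 - α := by linarith
  have hcpos : (0:ℝ) < 1 / (1 - α) := by positivity
  have hc1 : (1 / (1 - α)) * (1 - α) = 1 := by field_simp
  set c : ℝ := 1 / (1 - α) with hcdef
  have key : ∀ ν : ℝ, q + c * ∑ ω, π ω * max (z ω - q) 0 ≤
      ν + c * ∑ ω, π ω * max (z ω - ν) 0 := by
    intro ν
    set Sq := ∑ ω, π ω * max (z ω - q) 0 with hSqdef
    set Sν := ∑ ω, π ω * max (z ω - ν) 0 with hSνdef
    rcases le_total q ν with hνq | hνq
    · -- case q ≤ ν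
      set T := ∑ ω ∈ Finset.univ.filter (fun ω => ¬ z ω ≤ q), π ω with hTdef
      have hsplit : (∑ ω ∈ Finset.univ.filter (fun ω => z ω ≤ q), π ω) + T = 1 := by
        rw [hTdef, Finset.sum_filter_add_sum_filter_not]; exact hsum
      have hT : T ≤ 1 - α := by linarith
      have hpt : ∀ ω ∈ Finset.univ,
          π ω * max (z ω - q) 0 + (q - ν) * (if ¬ z ω ≤ q then π ω else 0)
            ≤ π ω * max (z ω - ν) 0 := by
        intro ω _
        by_cases h : z ω ≤ q
        · simp only [h, not_true_eq_false, if_false, mul_zero, add_zero]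
          have h1 : max (z ω - q) 0 = 0 := max_eq_right (by linarith)
          rw [h1, mul_zero]
          exact mul_nonneg (hπ ω).le (le_max_right _ _)
        · simp only [h, not_false_eq_true, if_true]
          push_neg at h
          have h1 : max (z ω - q) 0 = z ω - q := max_eq_left (by linarith)
          have h2 : z ω - ν ≤ max (z ω - ν) 0 := le_max_left _ _
          nlinarith [(hπ ω).le]
      have hsum1 : Sq + (q - ν) * T ≤ Sν := by
        have : Sq + (q - ν) * T =
            ∑ ω, (π ω * max (z ω - q) 0 + (q - ν) * (if ¬ z ω ≤ q then π ω else 0)) := by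
          rw [Finset.sum_add_distrib, hTdef, Finset.sum_filter, Finset.mul_sum]
        rw [this]
        exact Finset.sum_le_sum hpt
      have hprod : 0 ≤ ((ν - q) * c) * (1 - α - T) :=
        mul_nonneg (mul_nonneg (by linarith) hcpos.le) (by linarith)
      have h3 : (ν - q) * (c * (1 - α)) = ν - q := by rw [hc1]; ring
      nlinarith [mul_le_mul_of_nonneg_left hsum1 hcpos.le]
    · -- case ν ≤ q
      set T := ∑ ω ∈ Finset.univ.filter (fun ω => ¬ z ω < q), π ω with hTdef
      have hsplit : (∑ ω ∈ Finset.univ.filter (fun ω => z ω < q), π ω) + T = 1 := by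
        rw [hTdef, Finset.sum_filter_add_sum_filter_not]; exact hsum
      have hT : 1 - α ≤ T := by linarith
      have hpt : ∀ ω ∈ Finset.univ,
          π ω * max (z ω - q) 0 + (q - ν) * (if ¬ z ω < q then π ω else 0)
            ≤ π ω * max (z ω - ν) 0 := by
        intro ω _
        by_cases h : z ω < q
        · simp only [h, not_true_eq_false, if_false, mul_zero, add_zero]
          have h1 : max (z ω - q) 0 = 0 := max_eq_right (by linarith)
          rw [h1, mul_zero]
          exact mul_nonneg (hπ ω).le (le_max_right _ _)
        · simp only [h, not_false_eq_true, if_true]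
          push_neg at h
          have h1 : max (z ω - q) 0 = z ω - q := max_eq_left (by linarith)
          have h2 : z ω - ν ≤ max (z ω - ν) 0 := le_max_left _ _
          nlinarith [(hπ ω).le]
      have hsum1 : Sq + (q - ν) * T ≤ Sν := by
        have : Sq + (q - ν) * T =
            ∑ ω, (π ω * max (z ω - q) 0 + (q - ν) * (if ¬ z ω < q then π ω else 0)) := by
          rw [Finset.sum_add_distrib, hTdef, Finset.sum_filter, Finset.mul_sum]
        rw [this]
        exact Finset.sum_le_sum hpt
      have hprod : 0 ≤ ((q - ν) * c) * (T - (1 - α)) :=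
        mul_nonneg (mul_nonneg (by linarith) hcpos.le) (by linarith)
      have h3 : (q - ν) * (c * (1 - α)) = q - ν := by rw [hc1]; ring
      nlinarith [mul_le_mul_of_nonneg_left hsum1 hcpos.le]
  have hleast : IsLeast (Set.range (fun ν : ℝ => ν + c * ∑ ω, π ω * max (z ω - ν) 0))
      (q + c * ∑ ω, π ω * max (z ω - q) 0) := by
    constructor
    · exact ⟨q, rfl⟩
    · rintro x ⟨ν, rfl⟩
      exact key ν
  exact ⟨key, hleast, hleast.csInf_eq⟩
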